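/- For 0 < μ < 1 let S_μ = {(x, y) ∈ ℝ² : x ≥ 1, y ≥ 1, x² y ≤ μ^{−3}, x y⁵ ≤ μ^{−6}}. Then lim_{μ→0⁺} μ² · area(S_μ) = 9/4, where area denotes two-dimensional Lebesgue measure. -/

import Mathlib

open MeasureTheory Filter Real

/-- The region of `(N, k₁)` for type IIB vacua `AdS₅ × S⁵/ℤ_{k₁}` (the `Q = 8` case)
allowed by the cutoff `μ`. -/
def ads5Q8Region (μ : ℝ) : Set (ℝ × ℝ) :=
  {x | 1 ≤ x.1 ∧ 1 ≤ x.2 ∧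
    x.1 ^ 2 * x.2 ≤ μ ^ (-(3 : ℝ)) ∧ x.1 * x.2 ^ 5 ≤ μ ^ (-(6 : ℝ))}


lemma rpow5_key {B : ℝ} (hB : 0 ≤ B) : (B ^ (5⁻¹ : ℝ)) ^ 5 = B := by
  rw [show ((5:ℝ))⁻¹ = (((5:ℕ):ℝ))⁻¹ by norm_num]
  exact Real.rpow_inv_natCast_pow hB (by norm_num)

lemma le_rpow5_iff {B y : ℝ} (hB : 0 ≤ B) (hy : 0 ≤ y) :
    y ≤ B ^ (5⁻¹ : ℝ) ↔ y ^ 5 ≤ B := by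
  have h := (pow_le_pow_iff_left₀ (b := B ^ (5⁻¹ : ℝ)) (n := 5) hy
    (Real.rpow_nonneg hB (5⁻¹ : ℝ)) (by norm_num)).symm
  rwa [rpow5_key hB] at h

lemma rpow5_le_iff {B y : ℝ} (hB : 0 ≤ B) (hy : 0 ≤ y) :
    B ^ (5⁻¹ : ℝ) ≤ y ↔ B ≤ y ^ 5 := by
  have h := (pow_le_pow_iff_left₀ (a := B ^ (5⁻¹ : ℝ)) (n := 5)
    (Real.rpow_nonneg hB (5⁻¹ : ℝ)) hy (by norm_num)).symm
  rwa [rpow5_key hB] at h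

lemma slice_eq (b x : ℝ) (hx : 1 ≤ x) :
    {y : ℝ | 1 ≤ y ∧ x ^ 2 * y ≤ b ^ 30 ∧ x * y ^ 5 ≤ b ^ 60} =
      Set.Icc 1 (min (b ^ 30 / x ^ 2) ((b ^ 60 / x) ^ (5⁻¹ : ℝ))) := by
  have hx0 : (0:ℝ) < x := lt_of_lt_of_le one_pos hx
  have hx2 : (0:ℝ) < x ^ 2 := by positivity
  have hB : (0:ℝ) ≤ b ^ 60 / x := by positivity
  ext y
  simp only [Set.mem_setOf_eq, Set.mem_Icc, le_min_iff]
  constructor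
  · rintro ⟨h1, h2, h3⟩
    have hy0 : (0:ℝ) ≤ y := le_trans zero_le_one h1
    refine ⟨h1, ?_, ?_⟩
    · rw [le_div_iff₀ hx2]; linarith
    · rw [le_rpow5_iff hB hy0, le_div_iff₀ hx0]; linarith
  · rintro ⟨h1, h2, h3⟩
    have hy0 : (0:ℝ) ≤ y := le_trans zero_le_one h1
    rw [le_div_iff₀ hx2] at h2
    rw [le_rpow5_iff hB hy0, le_div_iff₀ hx0] at h3
    exact ⟨h1, by linarith, by linarith⟩

lemma I1_nonneg (b : ℝ) (hb : 1 ≤ b) : 0 ≤ 5/4*b^20 - 5/4*b^12 - b^10 + 1 := by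
  have ht : 1 ≤ b^2 := one_le_pow₀ hb
  set t := b^2 with htdef
  have h1 : 0 ≤ t^4 - 4*t + 3 := by
    nlinarith [sq_nonneg (t-1), sq_nonneg (t^2-1), mul_nonneg (sub_nonneg.2 ht) (sq_nonneg (t-1))]
  have h2 : 0 ≤ 4*t^5 - 5*t^4 + 1 := by
    nlinarith [sq_nonneg (t-1), sq_nonneg (t^2-1), mul_nonneg (sub_nonneg.2 ht) (sq_nonneg (t-1)),
      mul_nonneg (mul_nonneg (sub_nonneg.2 ht) (sub_nonneg.2 ht)) (sq_nonneg (t-1)),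
      mul_nonneg (sub_nonneg.2 ht) (sq_nonneg (t^2-1))]
  have h3 : 0 ≤ t - 1 := sub_nonneg.2 ht
  have ht0 : 0 ≤ t := by positivity
  have h6 : 0 ≤ t^6 - t^4 := by nlinarith [pow_le_pow_right₀ ht (show 4 ≤ 6 by norm_num)]
  have h4 : (0:ℝ) ≤ t^6 := by positivity
  have e : 5/4*b^20 - 5/4*b^12 - b^10 + 1 =
      5/4*t^6*(t^4 - 4*t + 3) + 5*(t-1)*(t^6-t^4) + (4*t^5 - 5*t^4 + 1) := by
    simp only [htdef]; ring
  rw [e]; positivity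

lemma I2_nonneg (b : ℝ) (hb : 1 ≤ b) : 0 ≤ b^20 - 2*b^15 + b^10 := by
  nlinarith [sq_nonneg (b^5 - 1), pow_nonneg (le_trans zero_le_one hb) 10]

lemma volume_S (b : ℝ) (hb : 1 ≤ b) :
    volume {p : ℝ × ℝ | 1 ≤ p.1 ∧ 1 ≤ p.2 ∧ p.1 ^ 2 * p.2 ≤ b ^ 30 ∧ p.1 * p.2 ^ 5 ≤ b ^ 60}
      = ENNReal.ofReal (9/4*b^20 - 2*b^15 - 5/4*b^12 + 1) := by
  have hb0 : (0:ℝ) < b := lt_of_lt_of_le one_pos hb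
  have hb0' : (0:ℝ) ≤ b := hb0.le
  have h1b10 : (1:ℝ) ≤ b^10 := one_le_pow₀ hb
  have h1b15 : (1:ℝ) ≤ b^15 := one_le_pow₀ hb
  have h10_15 : (b:ℝ)^10 ≤ b^15 := pow_le_pow_right₀ hb (by norm_num)
  set S : Set (ℝ × ℝ) :=
    {p : ℝ × ℝ | 1 ≤ p.1 ∧ 1 ≤ p.2 ∧ p.1 ^ 2 * p.2 ≤ b ^ 30 ∧ p.1 * p.2 ^ 5 ≤ b ^ 60} with hSdef
  have hS : MeasurableSet S := by
    apply MeasurableSet.inter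
    · exact measurableSet_le measurable_const measurable_fst
    apply MeasurableSet.inter
    · exact measurableSet_le measurable_const measurable_snd
    apply MeasurableSet.inter
    · exact measurableSet_le ((measurable_fst.pow_const 2).mul measurable_snd) measurable_const
    · exact measurableSet_le (measurable_fst.mul (measurable_snd.pow_const 5)) measurable_const
  set g : ℝ → ENNReal :=
    fun x => ENNReal.ofReal (min (b ^ 30 / x ^ 2) ((b ^ 60 / x) ^ (5⁻¹ : ℝ)) - 1) with hgdef
  have key : ∀ x : ℝ, volume (Prod.mk x ⁻¹' S) = (Set.Ici (1:ℝ)).indicator g x := by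
    intro x
    by_cases hx : 1 ≤ x
    · have hpre : Prod.mk x ⁻¹' S = {y : ℝ | 1 ≤ y ∧ x ^ 2 * y ≤ b ^ 30 ∧ x * y ^ 5 ≤ b ^ 60} := by
        ext y; simp [hSdef, hx]
      rw [hpre, slice_eq b x hx, Real.volume_Icc]
      exact (Set.indicator_of_mem (Set.mem_Ici.mpr hx) g).symm
    · have hpre : Prod.mk x ⁻¹' S = (∅ : Set ℝ) := by
        ext y; simp only [hSdef, Set.mem_preimage, Set.mem_setOf_eq, Set.mem_empty_iff_false,
          iff_false]
        rintro ⟨h1, -⟩; exact hx h1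
      rw [hpre, measure_empty]
      exact (Set.indicator_of_notMem (by simpa using hx) g).symm
  rw [MeasureTheory.Measure.volume_eq_prod, Measure.prod_apply hS, lintegral_congr key,
    lintegral_indicator measurableSet_Ici]
  have hsplit : Set.Ici (1:ℝ) = (Set.Icc 1 (b^10) ∪ Set.Ioc (b^10) (b^15)) ∪ Set.Ioi (b^15) := by
    rw [Set.Icc_union_Ioc_eq_Icc h1b10 h10_15, Set.Icc_union_Ioi_eq_Ici h1b15]
  have hdisj1 : Disjoint (Set.Icc (1:ℝ) (b^10)) (Set.Ioc (b^10) (b^15)) :=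
    Set.disjoint_left.mpr fun x hx hx' => hx.2.not_gt hx'.1
  have hdisj2 : Disjoint (Set.Icc (1:ℝ) (b^10) ∪ Set.Ioc (b^10) (b^15)) (Set.Ioi (b^15)) := by
    rw [Set.Icc_union_Ioc_eq_Icc h1b10 h10_15]
    exact Set.disjoint_left.mpr fun x hx hx' => hx.2.not_gt hx'
  rw [hsplit, lintegral_union measurableSet_Ioi hdisj2,
    lintegral_union measurableSet_Ioc hdisj1]
  -- third piece is zero
  have h3 : ∫⁻ x in Set.Ioi (b^15), g x = 0 := by
    rw [setLIntegral_congr_fun measurableSet_Ioi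
      (fun x (hx : x ∈ Set.Ioi (b^15)) => ?_), lintegral_zero]
    have hxgt : b^15 < x := hx
    have hx0 : (0:ℝ) < x := lt_of_le_of_lt (le_trans zero_le_one h1b15) hxgt
    have hlt : b^30 / x^2 < 1 := by
      rw [div_lt_one (by positivity)]
      nlinarith
    simp only [hgdef, ENNReal.ofReal_eq_zero]
    have := min_le_left (b ^ 30 / x ^ 2) ((b ^ 60 / x) ^ (5⁻¹ : ℝ))
    linarith
  -- first piece
  have hb12pos : (0:ℝ) < b^12 := by positivity
  have hb60eq : (b:ℝ)^60 = (b^12)^5 := by ring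
  have hrpow60 : ((b:ℝ)^60) ^ (5⁻¹:ℝ) = b^12 := by
    rw [hb60eq, show ((5:ℝ))⁻¹ = (((5:ℕ):ℝ))⁻¹ by norm_num,
      Real.pow_rpow_inv_natCast (by positivity) (by norm_num)]
  have e1 : ∀ x ∈ Set.Icc (1:ℝ) (b^10), g x = ENNReal.ofReal (b^12 * x ^ (-(5⁻¹:ℝ)) - 1) := by
    intro x hx
    have hx0 : (0:ℝ) < x := lt_of_lt_of_le one_pos hx.1
    have hmin : min (b^30/x^2) ((b^60/x)^(5⁻¹:ℝ)) = (b^60/x)^(5⁻¹:ℝ) := by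
      apply min_eq_right
      rw [rpow5_le_iff (by positivity) (by positivity),
        show ((b:ℝ)^30/x^2)^5 = b^150/x^10 by ring,
        div_le_div_iff₀ hx0 (by positivity)]
      have h9 : x^9 ≤ b^90 := by
        calc x^9 ≤ (b^10)^9 := pow_le_pow_left₀ hx0.le hx.2 9
          _ = b^90 := by ring
      nlinarith [mul_le_mul_of_nonneg_left h9 (show (0:ℝ) ≤ b^60 * x by positivity)]
    have hrw : ((b:ℝ)^60/x)^(5⁻¹:ℝ) = b^12 * x^(-(5⁻¹:ℝ)) := by
      rw [Real.div_rpow (by positivity) hx0.le, Real.rpow_neg hx0.le, div_eq_mul_inv, hrpow60]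
    simp only [hgdef]
    rw [hmin, hrw]
  have hint1 : IntegrableOn (fun x : ℝ => b^12 * x ^ (-(5⁻¹:ℝ)) - 1) (Set.Icc 1 (b^10)) := by
    apply ContinuousOn.integrableOn_Icc
    apply ContinuousOn.sub _ continuousOn_const
    apply ContinuousOn.mul continuousOn_const
    apply ContinuousOn.rpow_const continuousOn_id
    intro x hx
    exact Or.inl (ne_of_gt (lt_of_lt_of_le one_pos hx.1))
  have hnn1 : ∀ x ∈ Set.Icc (1:ℝ) (b^10), 0 ≤ b^12 * x ^ (-(5⁻¹:ℝ)) - 1 := by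
    intro x hx
    have hx0 : (0:ℝ) < x := lt_of_lt_of_le one_pos hx.1
    have h5 : x^(5⁻¹:ℝ) ≤ b^12 := by
      calc x^(5⁻¹:ℝ) ≤ (b^60)^(5⁻¹:ℝ) := by
            apply Real.rpow_le_rpow hx0.le _ (by norm_num)
            exact le_trans hx.2 (pow_le_pow_right₀ hb (by norm_num))
        _ = b^12 := hrpow60
    have hp : (0:ℝ) < x^(5⁻¹:ℝ) := Real.rpow_pos_of_pos hx0 _
    rw [sub_nonneg, Real.rpow_neg hx0.le, ← div_eq_mul_inv, le_div_iff₀ hp, one_mul]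
    exact h5
  have p1 : ∫⁻ x in Set.Icc 1 (b^10), g x
      = ENNReal.ofReal (5/4*b^20 - 5/4*b^12 - b^10 + 1) := by
    rw [setLIntegral_congr_fun measurableSet_Icc e1,
      ← ofReal_integral_eq_lintegral_ofReal hint1
        ((ae_restrict_iff' measurableSet_Icc).mpr (ae_of_all _ hnn1))]
    congr 1
    rw [integral_Icc_eq_integral_Ioc, ← intervalIntegral.integral_of_le h1b10,
      intervalIntegral.integral_sub
        ((intervalIntegral.intervalIntegrable_rpow' (by norm_num)).const_mul _)
        intervalIntegrable_const,
      intervalIntegral.integral_const_mul, integral_rpow (Or.inl (by norm_num)),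
      intervalIntegral.integral_const, smul_eq_mul, mul_one]
    have hev : ((b:ℝ)^10) ^ (-(5⁻¹:ℝ)+1) = b^8 := by
      rw [show (-(5⁻¹:ℝ)+1) = (4/5:ℝ) by norm_num, ← Real.rpow_natCast b 10,
        ← Real.rpow_mul hb0', show ((10:ℕ):ℝ) * (4/5) = ((8:ℕ):ℝ) by norm_num,
        Real.rpow_natCast]
    rw [hev, Real.one_rpow]
    norm_num
    ring
  -- second piece
  have p2 : ∫⁻ x in Set.Ioc (b^10) (b^15), g x
      = ENNReal.ofReal (b^20 - 2*b^15 + b^10) := by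
    have e2 : ∀ x ∈ Set.Ioc ((b:ℝ)^10) (b^15), g x = ENNReal.ofReal (b^30/x^2 - 1) := by
      intro x hx
      have hx0 : (0:ℝ) < x := lt_of_le_of_lt (le_trans zero_le_one h1b10) hx.1
      have hmin : min (b^30/x^2) ((b^60/x)^(5⁻¹:ℝ)) = b^30/x^2 := by
        apply min_eq_left
        rw [le_rpow5_iff (by positivity) (by positivity),
          show ((b:ℝ)^30/x^2)^5 = b^150/x^10 by ring,
          div_le_div_iff₀ (by positivity) hx0]
        have h9 : b^90 ≤ x^9 := by
          calc (b:ℝ)^90 = (b^10)^9 := by ring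
            _ ≤ x^9 := pow_le_pow_left₀ (by positivity) hx.1.le 9
        nlinarith [mul_le_mul_of_nonneg_left h9 (show (0:ℝ) ≤ b^60 * x by positivity)]
      simp only [hgdef, hmin]
    have hcont : ContinuousOn (fun x : ℝ => b^30/x^2 - 1) (Set.Icc (b^10) (b^15)) := by
      apply ContinuousOn.sub _ continuousOn_const
      apply ContinuousOn.div continuousOn_const (continuousOn_id.pow 2)
      intro x hx
      have : (0:ℝ) < x := lt_of_lt_of_le one_pos (le_trans h1b10 hx.1)
      exact pow_ne_zero 2 (ne_of_gt this)
    have hint2 : IntegrableOn (fun x : ℝ => b^30/x^2 - 1) (Set.Ioc (b^10) (b^15)) :=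
      (hcont.integrableOn_Icc).mono_set Set.Ioc_subset_Icc_self
    have hnn2 : ∀ x ∈ Set.Ioc ((b:ℝ)^10) (b^15), 0 ≤ b^30/x^2 - 1 := by
      intro x hx
      have hx0 : (0:ℝ) < x := lt_of_le_of_lt (le_trans zero_le_one h1b10) hx.1
      rw [sub_nonneg, one_le_div (by positivity)]
      calc x^2 ≤ (b^15)^2 := pow_le_pow_left₀ hx0.le hx.2 2
        _ = b^30 := by ring
    rw [setLIntegral_congr_fun measurableSet_Ioc e2,
      ← ofReal_integral_eq_lintegral_ofReal hint2
        ((ae_restrict_iff' measurableSet_Ioc).mpr (ae_of_all _ hnn2))]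
    congr 1
    have hnot : (0:ℝ) ∉ Set.uIcc ((b:ℝ)^10) (b^15) := by
      rw [Set.uIcc_of_le h10_15]
      simp only [Set.mem_Icc, not_and]
      intro h
      linarith
    have hEq : Set.EqOn (fun x : ℝ => b^30/x^2 - 1) (fun x : ℝ => b^30 * x^(-2:ℝ) - 1)
        (Set.uIcc ((b:ℝ)^10) (b^15)) := by
      intro x hx
      rw [Set.uIcc_of_le h10_15] at hx
      have hx0 : (0:ℝ) < x := lt_of_lt_of_le one_pos (le_trans h1b10 hx.1)
      have : x^(-2:ℝ) = (x^2)⁻¹ := by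
        rw [Real.rpow_neg hx0.le, show (2:ℝ)=((2:ℕ):ℝ) by norm_num, Real.rpow_natCast]
      simp only [this, div_eq_mul_inv]
    rw [← intervalIntegral.integral_of_le h10_15, intervalIntegral.integral_congr hEq,
      intervalIntegral.integral_sub
        ((intervalIntegral.intervalIntegrable_rpow (Or.inr hnot)).const_mul _)
        intervalIntegrable_const,
      intervalIntegral.integral_const_mul, integral_rpow (Or.inr ⟨by norm_num, hnot⟩),
      intervalIntegral.integral_const, smul_eq_mul, mul_one,
      show (-2:ℝ)+1 = -1 by norm_num, Real.rpow_neg_one, Real.rpow_neg_one]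
    have hne10 : ((b:ℝ)^10) ≠ 0 := by positivity
    have hne15 : ((b:ℝ)^15) ≠ 0 := by positivity
    field_simp
    ring
  rw [p1, p2, h3, add_zero, ← ENNReal.ofReal_add (I1_nonneg b hb) (I2_nonneg b hb)]
  congr 1
  ring

/-- The continuum count `𝔑^{(Q=8)}_{AdS₅}(μ)` is asymptotic to `(9/4) μ^{−2}`:
`lim_{μ→0⁺} μ² · area(S_μ) = 9/4`. -/
theorem ads5_Q8_count_asymptotics :
    Tendsto (fun μ : ℝ => μ ^ 2 * (volume (ads5Q8Region μ)).toReal)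
      (nhdsWithin 0 (Set.Ioi 0)) (nhds (9 / 4)) := by
  have hmem : Set.Ioo (0:ℝ) 1 ∈ nhdsWithin (0:ℝ) (Set.Ioi 0) :=
    Ioo_mem_nhdsGT_of_mem (by constructor <;> norm_num)
  have heq : ∀ μ ∈ Set.Ioo (0:ℝ) 1,
      μ ^ 2 * (volume (ads5Q8Region μ)).toReal
        = 9/4 - 2*μ^((1:ℝ)/2) - 5/4*μ^((4:ℝ)/5) + μ^2 := by
    intro μ hμ
    obtain ⟨hμ0, hμ1⟩ := hμ
    set b : ℝ := μ ^ (-(10⁻¹:ℝ)) with hbdef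
    have hb1 : 1 ≤ b := by
      rw [hbdef, Real.rpow_neg hμ0.le]
      exact (one_le_inv₀ (Real.rpow_pos_of_pos hμ0 _)).mpr
        (Real.rpow_le_one hμ0.le hμ1.le (by norm_num))
    have hpow : ∀ (n : ℕ) (c : ℝ), ((n:ℝ) * (-(10⁻¹:ℝ)) = c) → b ^ n = μ ^ c := by
      intro n c hc
      rw [hbdef, ← Real.rpow_natCast (μ ^ (-(10⁻¹:ℝ))) n, ← Real.rpow_mul hμ0.le, mul_comm, hc]
    have hb30 : b ^ 30 = μ ^ (-(3:ℝ)) := hpow 30 _ (by norm_num)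
    have hb60 : b ^ 60 = μ ^ (-(6:ℝ)) := hpow 60 _ (by norm_num)
    have hreg : ads5Q8Region μ
        = {p : ℝ × ℝ | 1 ≤ p.1 ∧ 1 ≤ p.2 ∧ p.1 ^ 2 * p.2 ≤ b ^ 30 ∧ p.1 * p.2 ^ 5 ≤ b ^ 60} := by
      unfold ads5Q8Region
      rw [hb30, hb60]
    have hT : (0:ℝ) ≤ 9/4*b^20 - 2*b^15 - 5/4*b^12 + 1 := by
      have h1 := I1_nonneg b hb1
      have h2 := I2_nonneg b hb1
      linarith
    rw [hreg, volume_S b hb1, ENNReal.toReal_ofReal hT]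
    have hb20 : b ^ 20 = μ ^ (-(2:ℝ)) := hpow 20 _ (by norm_num)
    have hb15 : b ^ 15 = μ ^ (-(3/2:ℝ)) := hpow 15 _ (by norm_num)
    have hb12 : b ^ 12 = μ ^ (-(6/5:ℝ)) := hpow 12 _ (by norm_num)
    have hmul : ∀ (c d : ℝ), ((2:ℝ) + c = d) → μ ^ 2 * μ ^ (c:ℝ) = μ ^ (d:ℝ) := by
      intro c d hd
      rw [← Real.rpow_natCast μ 2, ← Real.rpow_add hμ0]
      norm_num [hd]
    have m1 : μ ^ 2 * μ ^ (-(2:ℝ)) = 1 := by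
      rw [hmul (-(2:ℝ)) 0 (by norm_num), Real.rpow_zero]
    have m2 : μ ^ 2 * μ ^ (-(3/2:ℝ)) = μ ^ ((1:ℝ)/2) := hmul _ _ (by norm_num)
    have m3 : μ ^ 2 * μ ^ (-(6/5:ℝ)) = μ ^ ((4:ℝ)/5) := hmul _ _ (by norm_num)
    calc μ ^ 2 * (9/4*b^20 - 2*b^15 - 5/4*b^12 + 1)
        = 9/4*(μ^2*b^20) - 2*(μ^2*b^15) - 5/4*(μ^2*b^12) + μ^2 := by ring
      _ = 9/4 - 2*μ^((1:ℝ)/2) - 5/4*μ^((4:ℝ)/5) + μ^2 := by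
          rw [hb20, hb15, hb12, m1, m2, m3]; ring
  have hlim : Tendsto (fun μ : ℝ => 9/4 - 2*μ^((1:ℝ)/2) - 5/4*μ^((4:ℝ)/5) + μ^2)
      (nhdsWithin 0 (Set.Ioi 0)) (nhds (9/4)) := by
    have hr : ∀ c : ℝ, 0 < c → Tendsto (fun μ : ℝ => μ ^ (c:ℝ))
        (nhdsWithin 0 (Set.Ioi 0)) (nhds 0) := by
      intro c hc
      have h := (Real.continuousAt_rpow_const 0 c (Or.inr hc.le)).tendsto
      rw [Real.zero_rpow (ne_of_gt hc)] at h
      exact h.mono_left nhdsWithin_le_nhds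
    have h2 : Tendsto (fun μ : ℝ => μ ^ 2) (nhdsWithin 0 (Set.Ioi 0)) (nhds 0) := by
      have := ((continuous_pow 2).tendsto (0:ℝ)).mono_left
        (nhdsWithin_le_nhds (s := Set.Ioi (0:ℝ)))
      simpa using this
    have := ((((tendsto_const_nhds (x := (9/4:ℝ))).sub
      ((hr (1/2) (by norm_num)).const_mul 2)).sub
      ((hr (4/5) (by norm_num)).const_mul (5/4))).add h2)
    simpa using this
  exact hlim.congr' (by filter_upwards [hmem] with μ hμ using (heq μ hμ).symm)
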